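/- arXiv:2103.03139 — 2 statements merged into one kernel-verified Lean document; each statement's English description precedes it below -/
import Mathlib

section
/- Lower bound for Rademacher complexity of mixtures: let F be a class of functions X → ℝ and let p_1,...,p_r ≥ 0 with p := Σ_j p_j ≤ 1/2. Define G to be the set of functions of the form (1 - p) f_0 + Σ_j p_j f_j where f_0, f_1,...,f_r ∈ F (with f_0 and the f_j ranging so that every such mixture arising from the noise model belongs to G, and G ⊆ Conv(F)). Then R_S(G) ≥ (1 - 2p) R_S(F) for any sample S, provided that for every f_0 ∈ F there exist f_1,...,f_r ∈ F with (1-p) f_0 + Σ_j p_j f_j ∈ G. -/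
open scoped BigOperators

/-- The set of values `(1/m)|∑ i ε_i f(x_i)|` as `f` ranges over the class `F`,
for a fixed sign pattern `ε`. -/
def radSet {X : Type*} {m : ℕ} (S : Fin m → X) (F : Set (X → ℝ)) (ε : Fin m → Bool) : Set ℝ :=
  (fun f => (1 / (m : ℝ)) * |∑ i, (if ε i then (1 : ℝ) else -1) * f (S i)|) '' F

/-- Empirical Rademacher complexity of a class `F` of real-valued functions on the
sample `S = (x_1, …, x_m)`: the average over uniform signs `ε ∈ {−1,1}^m` of
`sup_{f ∈ F} (1/m)|∑ i ε_i f(x_i)|`. -/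
noncomputable def rad {X : Type*} {m : ℕ} (S : Fin m → X) (F : Set (X → ℝ)) : ℝ :=
  (∑ ε : Fin m → Bool, sSup (radSet S F ε)) / 2 ^ m

private lemma expand_mix {X : Type*} {m r : ℕ} (S : Fin m → X) (p : Fin r → ℝ)
    (sig : Fin m → ℝ) (P : ℝ) (f₀ : X → ℝ) (f : Fin r → X → ℝ) :
    ∑ i, sig i * ((1 - P) • f₀ + ∑ j, p j • f j) (S i)
      = (1 - P) * ∑ i, sig i * f₀ (S i) + ∑ j, p j * ∑ i, sig i * f j (S i) := by
  simp only [Pi.add_apply, Pi.smul_apply, Finset.sum_apply, smul_eq_mul, mul_add,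
    Finset.mul_sum, Finset.sum_add_distrib]
  rw [Finset.sum_comm]
  congr 1
  · exact Finset.sum_congr rfl fun i _ => by ring
  · exact Finset.sum_congr rfl fun j _ => Finset.sum_congr rfl fun i _ => by ring

/-- Lower bound for the Rademacher complexity of the class `G` of noisy mixtures
`(1 - ∑ j, p j) f₀ + ∑ j, p j • f j` of functions from `F`, where `∑ j, p j ≤ 1/2`:
`R_S(G) ≥ (1 - 2 ∑ j, p j) R_S(F)`. -/
theorem rad_mixture_lower_bound {X : Type*} {m r : ℕ} (S : Fin m → X)
    (F G : Set (X → ℝ)) (hF : F.Nonempty)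
    (hbdd : ∀ ε : Fin m → Bool, BddAbove (radSet S F ε))
    (p : Fin r → ℝ) (hp : ∀ j, 0 ≤ p j) (hp2 : ∑ j, p j ≤ 1 / 2)
    (hGform : ∀ g ∈ G, ∃ f₀ ∈ F, ∃ f : Fin r → X → ℝ, (∀ j, f j ∈ F) ∧
      g = (1 - ∑ j, p j) • f₀ + ∑ j, p j • f j)
    (hcover : ∀ f₀ ∈ F, ∃ f : Fin r → X → ℝ, (∀ j, f j ∈ F) ∧
      ((1 - ∑ j, p j) • f₀ + ∑ j, p j • f j) ∈ G) :
    (1 - 2 * ∑ j, p j) * rad S F ≤ rad S G := by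
  classical
  set P : ℝ := ∑ j, p j with hPdef
  have hP0 : 0 ≤ P := Finset.sum_nonneg fun j _ => hp j
  have hP1 : P < 1 := lt_of_le_of_lt hp2 (by norm_num)
  have h1P : (0:ℝ) < 1 - P := by linarith
  -- the key per-ε inequality
  have key : ∀ ε : Fin m → Bool, (1 - 2 * P) * sSup (radSet S F ε) ≤ sSup (radSet S G ε) := by
    intro ε
    set sig : Fin m → ℝ := fun i => if ε i then (1:ℝ) else -1 with hsig
    set M : ℝ := sSup (radSet S F ε) with hM
    have hval : ∀ f, f ∈ F → (1 / (m:ℝ)) * |∑ i, sig i * f (S i)| ≤ M :=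
      fun f hf => le_csSup (hbdd ε) ⟨f, hf, rfl⟩
    have hM0 : 0 ≤ M := by
      obtain ⟨f, hf⟩ := hF
      refine le_trans ?_ (hval f hf)
      positivity
    have hm0 : (0:ℝ) ≤ 1 / m := by positivity
    -- every element of radSet S G ε is at most M
    have hGle : ∀ y ∈ radSet S G ε, y ≤ M := by
      rintro y ⟨g, hg, rfl⟩
      obtain ⟨f₀, hf₀, f, hfj, rfl⟩ := hGform g hg
      show (1 / (m:ℝ)) * |∑ i, sig i * ((1 - P) • f₀ + ∑ j, p j • f j) (S i)| ≤ M
      rw [expand_mix S p sig P f₀ f]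
      calc (1 / (m:ℝ)) * |(1 - P) * ∑ i, sig i * f₀ (S i) + ∑ j, p j * ∑ i, sig i * f j (S i)|
          ≤ (1 / (m:ℝ)) * ((1 - P) * |∑ i, sig i * f₀ (S i)|
              + ∑ j, p j * |∑ i, sig i * f j (S i)|) := by
            refine mul_le_mul_of_nonneg_left ?_ hm0
            refine le_trans (abs_add_le _ _) (add_le_add ?_ ?_)
            · rw [abs_mul, abs_of_nonneg h1P.le]
            · refine le_trans (Finset.abs_sum_le_sum_abs _ _) ?_
              refine Finset.sum_le_sum fun j _ => ?_
              rw [abs_mul, abs_of_nonneg (hp j)]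
        _ = (1 - P) * ((1 / (m:ℝ)) * |∑ i, sig i * f₀ (S i)|)
              + ∑ j, p j * ((1 / (m:ℝ)) * |∑ i, sig i * f j (S i)|) := by
            rw [mul_add, Finset.mul_sum]
            congr 1
            · ring
            · exact Finset.sum_congr rfl fun j _ => by ring
        _ ≤ (1 - P) * M + ∑ j, p j * M := by
            refine add_le_add (mul_le_mul_of_nonneg_left (hval f₀ hf₀) h1P.le) ?_
            exact Finset.sum_le_sum fun j _ =>
              mul_le_mul_of_nonneg_left (hval (f j) (hfj j)) (hp j)
        _ = M := by rw [← Finset.sum_mul, ← hPdef]; ring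
    have hGbdd : BddAbove (radSet S G ε) := ⟨M, hGle⟩
    -- lower bound on the sup over G
    have hFle : ∀ y ∈ radSet S F ε, y ≤ (sSup (radSet S G ε) + P * M) / (1 - P) := by
      rintro y ⟨f₀, hf₀, rfl⟩
      obtain ⟨f, hfj, hgG⟩ := hcover f₀ hf₀
      rw [le_div_iff₀ h1P]
      have hmem : (1 / (m:ℝ)) *
          |∑ i, sig i * ((1 - P) • f₀ + ∑ j, p j • f j) (S i)| ∈ radSet S G ε :=
        ⟨_, hgG, rfl⟩
      have hle1 : (1 / (m:ℝ)) *
          |∑ i, sig i * ((1 - P) • f₀ + ∑ j, p j • f j) (S i)| ≤ sSup (radSet S G ε) :=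
        le_csSup hGbdd hmem
      have hlow : (1 - P) * ((1 / (m:ℝ)) * |∑ i, sig i * f₀ (S i)|)
          ≤ (1 / (m:ℝ)) * |∑ i, sig i * ((1 - P) • f₀ + ∑ j, p j • f j) (S i)|
            + ∑ j, p j * ((1 / (m:ℝ)) * |∑ i, sig i * f j (S i)|) := by
        rw [expand_mix S p sig P f₀ f]
        have habs : (1 - P) * |∑ i, sig i * f₀ (S i)|
            ≤ |(1 - P) * ∑ i, sig i * f₀ (S i) + ∑ j, p j * ∑ i, sig i * f j (S i)|
              + ∑ j, p j * |∑ i, sig i * f j (S i)| := by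
          have h1 : |(1 - P) * ∑ i, sig i * f₀ (S i)|
              ≤ |(1 - P) * ∑ i, sig i * f₀ (S i) + ∑ j, p j * ∑ i, sig i * f j (S i)|
                + |∑ j, p j * ∑ i, sig i * f j (S i)| := by
            have := abs_add_le ((1 - P) * ∑ i, sig i * f₀ (S i)
                + ∑ j, p j * ∑ i, sig i * f j (S i))
                (-(∑ j, p j * ∑ i, sig i * f j (S i)))
            simpa using this
          have h2 : |∑ j, p j * ∑ i, sig i * f j (S i)|
              ≤ ∑ j, p j * |∑ i, sig i * f j (S i)| := by
            refine le_trans (Finset.abs_sum_le_sum_abs _ _) ?_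
            refine Finset.sum_le_sum fun j _ => ?_
            rw [abs_mul, abs_of_nonneg (hp j)]
          rw [abs_mul, abs_of_nonneg h1P.le] at h1
          linarith
        calc (1 - P) * ((1 / (m:ℝ)) * |∑ i, sig i * f₀ (S i)|)
            = (1 / (m:ℝ)) * ((1 - P) * |∑ i, sig i * f₀ (S i)|) := by ring
          _ ≤ (1 / (m:ℝ)) * (|(1 - P) * ∑ i, sig i * f₀ (S i)
                + ∑ j, p j * ∑ i, sig i * f j (S i)|
                + ∑ j, p j * |∑ i, sig i * f j (S i)|) :=
              mul_le_mul_of_nonneg_left habs hm0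
          _ = (1 / (m:ℝ)) * |(1 - P) * ∑ i, sig i * f₀ (S i)
                + ∑ j, p j * ∑ i, sig i * f j (S i)|
                + ∑ j, p j * ((1 / (m:ℝ)) * |∑ i, sig i * f j (S i)|) := by
              rw [mul_add]
              congr 1
              rw [Finset.mul_sum]
              exact Finset.sum_congr rfl fun j _ => by ring
      have hsum : ∑ j, p j * ((1 / (m:ℝ)) * |∑ i, sig i * f j (S i)|) ≤ P * M := by
        rw [hPdef, Finset.sum_mul]
        exact Finset.sum_le_sum fun j _ =>
          mul_le_mul_of_nonneg_left (hval (f j) (hfj j)) (hp j)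
      calc (1 / (m:ℝ)) * |∑ i, (if ε i then (1:ℝ) else -1) * f₀ (S i)| * (1 - P)
          = (1 - P) * ((1 / (m:ℝ)) * |∑ i, sig i * f₀ (S i)|) := by rw [hsig]; ring
        _ ≤ (1 / (m:ℝ)) * |∑ i, sig i * ((1 - P) • f₀ + ∑ j, p j • f j) (S i)|
              + ∑ j, p j * ((1 / (m:ℝ)) * |∑ i, sig i * f j (S i)|) := hlow
        _ ≤ sSup (radSet S G ε) + P * M := add_le_add hle1 hsum
    have hFne : (radSet S F ε).Nonempty := hF.image _
    have hMle : M ≤ (sSup (radSet S G ε) + P * M) / (1 - P) := csSup_le hFne hFle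
    rw [le_div_iff₀ h1P] at hMle
    nlinarith
  -- sum over ε
  unfold rad
  rw [← mul_div_assoc, Finset.mul_sum]
  gcongr with ε hε
  exact key ε
end

section
/- Robustness lower bound for Rademacher complexity: let F, G be classes of real-valued functions on X and γ ≥ 0 be such that for every f ∈ F there exist g_1, g_2 ∈ Conv(G) with f = (1+γ) g_1 − γ g_2. Then for any sample S, R_S(F) ≤ (1 + 2γ) R_S(G), equivalently R_S(G) ≥ (1+2γ)^{-1} R_S(F). -/
open scoped BigOperators

/-- The linear functional `g ↦ ∑ i ε_i g (S i)`. -/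
noncomputable def radLin {X : Type*} {m : ℕ} (S : Fin m → X) (ε : Fin m → Bool) :
    (X → ℝ) →ₗ[ℝ] ℝ :=
  ∑ i, (if ε i then (1 : ℝ) else -1) • LinearMap.proj (S i)

lemma radLin_apply {X : Type*} {m : ℕ} (S : Fin m → X) (ε : Fin m → Bool) (g : X → ℝ) :
    radLin S ε g = ∑ i, (if ε i then (1 : ℝ) else -1) * g (S i) := by
  simp [radLin, Finset.sum_apply]
  congr 1; ext i; split <;> simp [mul_comm]

/-- Convex combinations of G have Rademacher correlation bounded by `sSup (radSet S G ε)`. -/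
lemma conv_bound {X : Type*} {m : ℕ} (S : Fin m → X) (G : Set (X → ℝ)) (ε : Fin m → Bool)
    (hbddG : BddAbove (radSet S G ε)) {g : X → ℝ} (hg : g ∈ convexHull ℝ G) :
    (1 / (m : ℝ)) * |radLin S ε g| ≤ sSup (radSet S G ε) := by
  have hconv : ConvexOn ℝ (Set.univ : Set (X → ℝ)) (fun g => |radLin S ε g|) := by
    have := (convexOn_univ_norm (E := ℝ)).comp_linearMap (radLin S ε)
    exact this
  obtain ⟨g', hg', hle⟩ := hconv.exists_ge_of_mem_convexHull (Set.subset_univ G) hg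
  calc (1 / (m : ℝ)) * |radLin S ε g| ≤ (1 / (m : ℝ)) * |radLin S ε g'| := by
        apply mul_le_mul_of_nonneg_left hle
        positivity
    _ ≤ sSup (radSet S G ε) := by
        apply le_csSup hbddG
        exact ⟨g', hg', by rw [radLin_apply]⟩

/-- Robustness lower bound: if every `f ∈ F` decomposes as `(1+γ) g₁ - γ g₂` with
`g₁, g₂ ∈ Conv(G)`, then `R_S(F) ≤ (1 + 2γ) R_S(G)`. -/
theorem rad_robustness_bound {X : Type*} {m : ℕ} (S : Fin m → X)
    (F G : Set (X → ℝ)) (hF : F.Nonempty) (hG : G.Nonempty)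
    (hbddF : ∀ ε : Fin m → Bool, BddAbove (radSet S F ε))
    (hbddG : ∀ ε : Fin m → Bool, BddAbove (radSet S G ε))
    (γ : ℝ) (hγ : 0 ≤ γ)
    (hdec : ∀ f ∈ F, ∃ g₁ ∈ convexHull ℝ G, ∃ g₂ ∈ convexHull ℝ G,
      f = (1 + γ) • g₁ - γ • g₂) :
    rad S F ≤ (1 + 2 * γ) * rad S G := by
  have key : ∀ ε : Fin m → Bool,
      sSup (radSet S F ε) ≤ (1 + 2 * γ) * sSup (radSet S G ε) := by
    intro ε
    apply Real.sSup_le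
    · rintro x ⟨f, hf, rfl⟩
      obtain ⟨g₁, hg₁, g₂, hg₂, hfd⟩ := hdec f hf
      have h1 := conv_bound S G ε (hbddG ε) hg₁
      have h2 := conv_bound S G ε (hbddG ε) hg₂
      have hfv : radLin S ε f = (1 + γ) * radLin S ε g₁ - γ * radLin S ε g₂ := by
        rw [hfd]; simp
      have habs : |radLin S ε f| ≤ (1 + γ) * |radLin S ε g₁| + γ * |radLin S ε g₂| := by
        rw [hfv]
        calc |(1 + γ) * radLin S ε g₁ - γ * radLin S ε g₂|
            ≤ |(1 + γ) * radLin S ε g₁| + |γ * radLin S ε g₂| := abs_sub _ _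
          _ = (1 + γ) * |radLin S ε g₁| + γ * |radLin S ε g₂| := by
              rw [abs_mul, abs_mul, abs_of_nonneg (by linarith), abs_of_nonneg hγ]
      have : (1 / (m : ℝ)) * |∑ i, (if ε i then (1 : ℝ) else -1) * f (S i)|
          = (1 / (m : ℝ)) * |radLin S ε f| := by rw [radLin_apply]
      dsimp only
      rw [this]
      calc (1 / (m : ℝ)) * |radLin S ε f|
          ≤ (1 / (m : ℝ)) * ((1 + γ) * |radLin S ε g₁| + γ * |radLin S ε g₂|) := by
            apply mul_le_mul_of_nonneg_left habs; positivity
        _ = (1 + γ) * ((1 / (m : ℝ)) * |radLin S ε g₁|)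
            + γ * ((1 / (m : ℝ)) * |radLin S ε g₂|) := by ring
        _ ≤ (1 + γ) * sSup (radSet S G ε) + γ * sSup (radSet S G ε) := by
            gcongr <;> linarith
        _ = (1 + 2 * γ) * sSup (radSet S G ε) := by ring
    · have hS0 : 0 ≤ sSup (radSet S G ε) := by
        obtain ⟨g, hg⟩ := hG
        have : (1 / (m : ℝ)) * |∑ i, (if ε i then (1 : ℝ) else -1) * g (S i)|
            ∈ radSet S G ε := ⟨g, hg, rfl⟩
        have := le_csSup (hbddG ε) this
        have h0 : (0 : ℝ) ≤ (1 / (m : ℝ)) * |∑ i, (if ε i then (1 : ℝ) else -1) * g (S i)| := by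
          positivity
        linarith
      positivity
  rw [rad, rad, mul_div_assoc']
  apply div_le_div_of_nonneg_right _ (by positivity)
  · rw [Finset.mul_sum]
    exact Finset.sum_le_sum fun ε _ => key ε
end
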